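/- Let $L \ge 2$ be an integer, $\ep \in (0, 1/2]$ with $A = L^{\ep} \in (1,2)$, $a > 0$, $g_* = (A-1)/a$, $\omega_0 \in (0,1)$, and $(\bar g_n)_{n\in\mathbb{Z}}$ the orbit of $f(x) = Ax - ax^2$ with $\bar g_0 = \omega_0 g_*$. Suppose $0 \le \gamma \le 1$, $\nu > 0$, and $\Upsilon := \frac{2 L^{\ep/\nu}}{A + \sqrt{A^2 - 4\omega_0(A-1)}} \in (0,1)$. Then for every integer $n < 0$, $\frac{1}{\bar g_n^{\gamma}} \sum_{n \le p < 0} \bar g_p^{\nu} \prod_{n \le j \le p} \frac{1}{f'(\bar g_j)} \;\le\; \frac{(\omega_0 g_*)^{\nu-\gamma}}{1 - \Upsilon^{\nu}} \exp\!\left[\frac{\omega_0\bigl(2 - A + \sqrt{A^2 - 4\omega_0(A-1)}\bigr)}{(1-\omega_0)\bigl(A - 2\omega_0(A-1)\bigr)}\right]$. -/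

import Mathlib

private lemma geom_aux (n : ℤ) (q : ℝ) (hq0 : 0 ≤ q) (hq1 : q < 1) :
    ∑ p ∈ Finset.Ico n 0, q ^ ((-1 - p).toNat) ≤ (1 - q)⁻¹ := by
  have h1q : 0 < 1 - q := by linarith
  have heq : ∑ p ∈ Finset.Ico n 0, q ^ ((-1 - p).toNat)
      = ∑ m ∈ Finset.range (-n).toNat, q ^ m := by
    refine Finset.sum_nbij' (fun p => (-1 - p).toNat) (fun m => -1 - (m : ℤ)) ?_ ?_ ?_ ?_ ?_
    · intro p hp; simp only [Finset.mem_Ico] at hp; simp only [Finset.mem_range]; omega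
    · intro m hm; simp only [Finset.mem_range] at hm; simp only [Finset.mem_Ico]; omega
    · intro p hp; simp only [Finset.mem_Ico] at hp; omega
    · intro m hm; simp only [Finset.mem_range] at hm; omega
    · intro p hp; rfl
  rw [heq, geom_sum_eq (by intro h; rw [h] at hq1; exact lt_irrefl 1 hq1)]
  rw [div_le_iff_of_neg (by linarith : q - 1 < 0)]
  have h2 : (1 - q)⁻¹ * (q - 1) = -1 := by field_simp; ring
  rw [h2]
  linarith [pow_nonneg hq0 ((-n).toNat)]

set_option maxHeartbeats 1000000 in
theorem stmt_10 (L : ℕ) (hL : 2 ≤ L) (ε : ℝ) (hε1 : 0 < ε) (hε2 : ε ≤ 1 / 2)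
    (A : ℝ) (hA : A = (L : ℝ) ^ ε) (hA1 : 1 < A) (hA2 : A < 2) (a : ℝ) (ha : 0 < a)
    (f : ℝ → ℝ) (hf : ∀ x, f x = A * x - a * x ^ 2)
    (gs : ℝ) (hgs : gs = (A - 1) / a)
    (ω0 : ℝ) (hω0 : ω0 ∈ Set.Ioo (0 : ℝ) 1)
    (gbar : ℤ → ℝ) (hmem : ∀ n : ℤ, gbar n ∈ Set.Ioo 0 gs)
    (h0 : gbar 0 = ω0 * gs) (hrec : ∀ n : ℤ, gbar (n + 1) = f (gbar n))
    (γ ν : ℝ) (hγ0 : 0 ≤ γ) (hγ1 : γ ≤ 1) (hν : 0 < ν)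
    (Υ : ℝ)
    (hΥ : Υ = 2 * (L : ℝ) ^ (ε / ν) / (A + Real.sqrt (A ^ 2 - 4 * ω0 * (A - 1))))
    (hΥ01 : Υ ∈ Set.Ioo (0 : ℝ) 1) :
    ∀ n : ℤ, n < 0 →
      (1 / gbar n ^ γ) *
          ∑ p ∈ Finset.Ico n (0 : ℤ),
            gbar p ^ ν * ∏ j ∈ Finset.Icc n p, (A - 2 * a * gbar j)⁻¹ ≤
        (ω0 * gs) ^ (ν - γ) / (1 - Υ ^ ν) *
          Real.exp (ω0 * (2 - A + Real.sqrt (A ^ 2 - 4 * ω0 * (A - 1))) /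
            ((1 - ω0) * (A - 2 * ω0 * (A - 1)))) := by
  obtain ⟨hω0p, hω1⟩ := hω0
  obtain ⟨hΥ0, hΥ1⟩ := hΥ01
  set s := Real.sqrt (A ^ 2 - 4 * ω0 * (A - 1)) with hsdef
  have hA0 : (0:ℝ) < A := by linarith
  have hgsp : 0 < gs := by rw [hgs]; exact div_pos (by linarith) ha
  have hags : a * gs = A - 1 := by rw [hgs]; field_simp
  have hw : 0 < ω0 * gs := mul_pos hω0p hgsp
  have hprod1 : 0 < (1 - ω0) * (A - 1) :=
    mul_pos (by linarith) (by linarith)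
  have hDnn : 0 ≤ A ^ 2 - 4 * ω0 * (A - 1) := by nlinarith [sq_nonneg (A - 2), hprod1]
  have hs2 : s ^ 2 = A ^ 2 - 4 * ω0 * (A - 1) := Real.sq_sqrt hDnn
  have hs0 : 0 < s := Real.sqrt_pos.mpr (by nlinarith [sq_nonneg (A - 2), hprod1])
  have hsA : s < A := by nlinarith [hs2, hw, mul_pos hω0p (show (0:ℝ) < A - 1 by linarith)]
  have h2As : 2 - A < s := by nlinarith [hs2, hprod1]
  set ρ := 2 / (A + s) with hρdef
  have hAs : 0 < A + s := by linarith
  have hρ0 : 0 < ρ := by positivity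
  have hρ1 : ρ < 1 := by rw [hρdef, div_lt_one hAs]; linarith
  have h1ρ : 0 < 1 - ρ := by linarith
  have hρAs : ρ * (A + s) = 2 := by rw [hρdef]; field_simp
  -- gbar basics
  have hgpos : ∀ k : ℤ, 0 < gbar k := fun k => (hmem k).1
  have hglt : ∀ k : ℤ, gbar k < gs := fun k => (hmem k).2
  have hgrec : ∀ k : ℤ, gbar (k + 1) = gbar k * (A - a * gbar k) := by
    intro k; rw [hrec k, hf]; ring
  have hmono : StrictMono gbar := by
    apply strictMono_int_of_lt_succ
    intro k
    have h1 := hgrec k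
    have h2 := hgpos k
    have h3 := mul_lt_mul_of_pos_left (hglt k) ha
    have h4 : 1 < A - a * gbar k := by linarith [hags]
    calc gbar k = gbar k * 1 := (mul_one _).symm
      _ < gbar k * (A - a * gbar k) := by
          exact mul_lt_mul_of_pos_left h4 h2
      _ = gbar (k + 1) := h1.symm
  -- the value of gbar (-1)
  have hfix : gbar (-1) * (A - a * gbar (-1)) = ω0 * gs := by
    have h := hgrec (-1); norm_num at h; rw [← h]; exact h0
  have hsq : (A - 2 * a * gbar (-1)) ^ 2 = s ^ 2 := by
    rw [hs2]; linear_combination (-4*a) * hfix - 4*ω0 * hags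
  have hpos1 : 0 < A - 2 * a * gbar (-1) := by
    have h3 := mul_lt_mul_of_pos_left (hglt (-1)) ha
    linarith [hags]
  have hkey : A - 2 * a * gbar (-1) = s := by
    have hfac : (A - 2*a*gbar (-1) - s) * (A - 2*a*gbar (-1) + s) = 0 := by
      linear_combination hsq
    rcases mul_eq_zero.mp hfac with h | h
    · linarith
    · linarith
  have hg1 : gbar (-1) = ω0 * gs * ρ := by
    have h3 : (0:ℝ) < 2 * a * (A + s) := by positivity
    have h4 : gbar (-1) * (2 * a * (A + s)) = ω0 * gs * ρ * (2 * a * (A + s)) := by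
      have hk2 : 2 * a * gbar (-1) = A - s := by linarith
      calc gbar (-1) * (2*a*(A+s)) = (2*a*gbar (-1)) * (A+s) := by ring
        _ = (A - s)*(A+s) := by rw [hk2]
        _ = A^2 - s^2 := by ring
        _ = 4*ω0*(A-1) := by rw [hs2]; ring
        _ = 4*ω0*(a*gs) := by rw [hags]
        _ = ω0*gs*(2*a)*(ρ*(A+s)) := by rw [hρAs]; ring
        _ = ω0*gs*ρ*(2*a*(A+s)) := by ring
    exact mul_right_cancel₀ (ne_of_gt h3) h4
  have haux : a * (ω0 * gs * ρ) = (A - s) / 2 := by rw [← hg1]; linarith [hkey]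
  -- backward geometric upper bound
  have hub : ∀ m : ℕ, gbar (-1 - (m:ℤ)) ≤ ω0 * gs * ρ ^ (m + 1) := by
    intro m
    induction m with
    | zero => simpa using hg1.le
    | succ k ih =>
      push_cast
      set x := gbar (-1 - ((k:ℤ) + 1)) with hx
      have hrec' : gbar (-1 - (k:ℤ)) = x * (A - a * x) := by
        have h := hgrec (-1 - ((k:ℤ) + 1))
        rw [show (-1 - ((k:ℤ) + 1)) + 1 = -1 - (k:ℤ) by ring] at h
        exact h
      have hlt : x < gbar (-1) := hmono (show (-1 - ((k:ℤ)+1)) < -1 by omega)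
      have hax : a * x < (A - s) / 2 := by
        have h1 : a * x < a * gbar (-1) := mul_lt_mul_of_pos_left hlt ha
        have h2 : a * gbar (-1) = (A - s)/2 := by rw [hg1]; exact haux
        linarith
      have hxpos : 0 < x := hgpos _
      have h5 : x * ((A+s)/2) ≤ gbar (-1 - (k:ℤ)) := by
        rw [hrec']
        exact mul_le_mul_of_nonneg_left (by linarith) hxpos.le
      have hρinv : ρ * ((A+s)/2) = 1 := by rw [hρdef]; field_simp
      have h6 : x ≤ ρ * gbar (-1 - (k:ℤ)) := by
        calc x = ρ * (x * ((A+s)/2)) := by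
              rw [show ρ*(x*((A+s)/2)) = x*(ρ*((A+s)/2)) by ring, hρinv, mul_one]
          _ ≤ ρ * gbar (-1 - (k:ℤ)) := mul_le_mul_of_nonneg_left h5 hρ0.le
      calc x ≤ ρ * gbar (-1 - (k:ℤ)) := h6
        _ ≤ ρ * (ω0 * gs * ρ ^ (k+1)) := mul_le_mul_of_nonneg_left ih hρ0.le
        _ = ω0 * gs * ρ ^ (k+1+1) := by ring
  -- backward lower bound
  have hlb : ∀ m : ℕ, ω0 * gs ≤ gbar (-(m:ℤ)) * A ^ m := by
    intro m
    induction m with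
    | zero => simp [h0]
    | succ k ih =>
      have h := hgrec (-(k:ℤ) - 1)
      rw [show (-(k:ℤ) - 1) + 1 = -(k:ℤ) by ring] at h
      have hx := hgpos (-(k:ℤ) - 1)
      have h2 : gbar (-(k:ℤ)) ≤ gbar (-(k:ℤ)-1) * A := by
        rw [h]
        have h2' := mul_pos ha hx
        exact mul_le_mul_of_nonneg_left (by linarith) hx.le
      have hApk : (0:ℝ) < A ^ k := pow_pos hA0 k
      have h3 : ω0 * gs ≤ (gbar (-(k:ℤ)-1) * A) * A ^ k := by
        calc ω0*gs ≤ gbar (-(k:ℤ)) * A^k := ih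
          _ ≤ (gbar (-(k:ℤ)-1)*A) * A^k := mul_le_mul_of_nonneg_right h2 hApk.le
      push_cast
      rw [show -((k:ℤ)+1) = -(k:ℤ)-1 by ring]
      calc ω0*gs ≤ (gbar (-(k:ℤ)-1) * A) * A ^ k := h3
        _ = gbar (-(k:ℤ)-1) * A ^ (k+1) := by ring
  -- B and pointwise bound
  set B := A - 2 * ω0 * (A - 1) with hBdef
  have hB : 0 < B := by rw [hBdef]; linarith [hprod1]
  have hBj : ∀ j : ℤ, j ≤ -1 → B ≤ A - 2 * a * gbar j ∧ 0 < A - a * gbar j := by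
    intro j hj
    have h1 : gbar j < gbar 0 := hmono (by omega)
    have h2 : a * gbar j < ω0 * (A - 1) := by
      have h3 := mul_lt_mul_of_pos_left h1 ha
      rw [h0] at h3
      have h4 : a * (ω0 * gs) = ω0 * (A - 1) := by rw [← hags]; ring
      linarith
    constructor
    · rw [hBdef]; linarith
    · linarith [hprod1]
  have hpt : ∀ j : ℤ, j ≤ -1 →
      (A - 2 * a * gbar j)⁻¹ ≤ gbar j / gbar (j + 1) * Real.exp (a / B * gbar j) := by
    intro j hj
    obtain ⟨hu, hv⟩ := hBj j hj
    have hupos : 0 < A - 2 * a * gbar j := lt_of_lt_of_le hB hu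
    have hgj := hgpos j
    have hratio : gbar j / gbar (j + 1) = (A - a * gbar j)⁻¹ := by
      rw [hgrec j]
      rw [div_mul_eq_div_div, div_self hgj.ne', one_div]
    have hK : (A - a * gbar j) ≤ (1 + a * gbar j / B) * (A - 2 * a * gbar j) := by
      have hbb : a * gbar j / B * B = a * gbar j := by field_simp
      have hint := mul_nonneg (div_nonneg (mul_nonneg ha.le hgj.le) hB.le)
        (sub_nonneg.mpr hu)
      linarith [hint, hbb]
    have hexp : 1 + a * gbar j / B ≤ Real.exp (a / B * gbar j) := by
      calc 1 + a * gbar j / B = a / B * gbar j + 1 := by ring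
        _ ≤ Real.exp (a / B * gbar j) := Real.add_one_le_exp _
    rw [hratio]
    calc (A - 2*a*gbar j)⁻¹ ≤ (A - a*gbar j)⁻¹ * (1 + a*gbar j/B) := by
          rw [inv_eq_one_div, inv_eq_one_div, div_mul_eq_mul_div,
            div_le_div_iff₀ hupos hv]
          linarith [hK]
      _ ≤ (A - a*gbar j)⁻¹ * Real.exp (a/B*gbar j) :=
          mul_le_mul_of_nonneg_left hexp (inv_nonneg.mpr hv.le)
  -- insert lemma for Icc
  have hins : ∀ q p : ℤ, q ≤ p + 1 → Finset.Icc q (p+1) = insert (p+1) (Finset.Icc q p) := by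
    intro q p h; ext x; simp only [Finset.mem_Icc, Finset.mem_insert]; omega
  -- Υ^ν = A * ρ^ν
  have hLpos : (0:ℝ) < (L:ℝ) := by positivity
  have hUps : Υ = (L:ℝ)^(ε/ν) * ρ := by rw [hΥ, hρdef]; ring
  have hUpsν : Υ ^ ν = A * ρ ^ ν := by
    rw [hUps, Real.mul_rpow (Real.rpow_nonneg hLpos.le _) hρ0.le, hA]
    congr 1
    rw [← Real.rpow_mul hLpos.le]
    congr 1
    field_simp
  have hUq0 : 0 ≤ Υ ^ ν := Real.rpow_nonneg hΥ0.le ν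
  have hUq1 : Υ ^ ν < 1 := Real.rpow_lt_one hΥ0.le hΥ1 hν
  have hρνA : A * ρ ^ ν < 1 := by rw [← hUpsν]; exact hUq1
  -- core scalar inequality
  have h8 : ∀ m : ℕ, (ω0*gs * ρ^(m+1)) ^ ν * (ω0*gs * (A^(m+1))⁻¹) ^ (-γ)
      ≤ (ω0*gs) ^ (ν - γ) * (Υ^ν)^m := by
    intro m
    have hc : (0:ℝ) ≤ (m:ℝ) := Nat.cast_nonneg m
    have e1 : (ρ^(m+1):ℝ) ^ ν = ρ ^ (((m:ℝ)+1) * ν) := by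
      rw [← Real.rpow_natCast ρ (m+1), ← Real.rpow_mul hρ0.le]
      congr 1
      push_cast
      ring
    have e2 : ((A^(m+1):ℝ))⁻¹ ^ (-γ) = A ^ (((m:ℝ)+1) * γ) := by
      rw [← Real.rpow_natCast A (m+1), ← Real.rpow_neg hA0.le, ← Real.rpow_mul hA0.le]
      congr 1
      push_cast
      ring
    have e3 : ((Υ^ν)^m : ℝ) = A ^ ((m:ℝ)) * ρ ^ (ν * (m:ℝ)) := by
      rw [hUpsν, mul_pow, ← Real.rpow_natCast A m, ← Real.rpow_natCast (ρ^ν) m,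
        ← Real.rpow_mul hρ0.le]
    have e4 : (ω0*gs) ^ (ν - γ) = (ω0*gs) ^ ν * (ω0*gs) ^ (-γ) := by
      rw [sub_eq_add_neg, Real.rpow_add hw]
    have e5 : ρ ^ (((m:ℝ)+1) * ν) = ρ ^ (ν * (m:ℝ)) * ρ ^ ν := by
      rw [← Real.rpow_add hρ0]; congr 1; ring
    rw [Real.mul_rpow hw.le (pow_nonneg hρ0.le _),
      Real.mul_rpow hw.le (inv_nonneg.mpr (pow_nonneg hA0.le _)),
      e1, e2, e3, e4, e5]
    have hcore : ρ^ν * A^(((m:ℝ)+1)*γ) ≤ A^((m:ℝ)) := by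
      have k1 : ρ^ν ≤ A^(-1:ℝ) := by
        rw [Real.rpow_neg_one, inv_eq_one_div, le_div_iff₀ hA0]
        linarith [hρνA]
      have k2 : A^(((m:ℝ)+1)*γ) ≤ A^((m:ℝ)+1) := by
        apply Real.rpow_le_rpow_of_exponent_le hA1.le
        have := mul_nonneg (show (0:ℝ) ≤ (m:ℝ)+1 by linarith) (show (0:ℝ) ≤ 1-γ by linarith)
        linarith [this]
      calc ρ^ν * A^(((m:ℝ)+1)*γ) ≤ A^(-1:ℝ) * A^((m:ℝ)+1) :=
            mul_le_mul k1 k2 (Real.rpow_nonneg hA0.le _) (Real.rpow_nonneg hA0.le _)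
        _ = A^((m:ℝ)) := by rw [← Real.rpow_add hA0]; norm_num
    have hfac : (0:ℝ) ≤ (ω0*gs)^ν * (ω0*gs)^(-γ) * ρ^(ν*(m:ℝ)) :=
      mul_nonneg (mul_nonneg (Real.rpow_nonneg hw.le _) (Real.rpow_nonneg hw.le _))
        (Real.rpow_nonneg hρ0.le _)
    calc (ω0*gs)^ν * (ρ^(ν*(m:ℝ)) * ρ^ν) * ((ω0*gs)^(-γ) * A^(((m:ℝ)+1)*γ))
        = ((ω0*gs)^ν * (ω0*gs)^(-γ) * ρ^(ν*(m:ℝ))) * (ρ^ν * A^(((m:ℝ)+1)*γ)) := by ring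
      _ ≤ ((ω0*gs)^ν * (ω0*gs)^(-γ) * ρ^(ν*(m:ℝ))) * A^((m:ℝ)) :=
          mul_le_mul_of_nonneg_left hcore hfac
      _ = (ω0*gs)^ν * (ω0*gs)^(-γ) * (A^((m:ℝ)) * ρ^(ν*(m:ℝ))) := by ring
  -- exponent constant bound
  set E := ω0 * (2 - A + s) / ((1 - ω0) * B) with hEdef
  have hEbd : a / B * (ω0 * gs * ρ * (1 - ρ)⁻¹) ≤ E := by
    have hd : (1-ρ)*(A+s) = A+s-2 := by linear_combination (-1) * hρAs
    have hABval : (2-A+s)*(A+s-2) = 4*(A-1)*(1-ω0) := by linear_combination hs2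
    have hrw : a / B * (ω0*gs*ρ*(1-ρ)⁻¹) = a*(ω0*gs)*ρ / (B*(1-ρ)) := by
      field_simp
    rw [hrw, hEdef, div_le_div_iff₀ (mul_pos hB h1ρ)
      (mul_pos (show (0:ℝ) < 1-ω0 by linarith) hB)]
    have hL2 : a*(ω0*gs)*ρ*((1-ω0)*B)*(A+s) = 2*ω0*(A-1)*(1-ω0)*B := by
      linear_combination (ω0*(1-ω0)*B*(a*gs))*hρAs + (2*ω0*(1-ω0)*B)*hags
    have hR2 : ω0*(2-A+s)*(B*(1-ρ))*(A+s) = 4*ω0*(A-1)*(1-ω0)*B := by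
      linear_combination (ω0*B*(2-A+s))*hd + (ω0*B)*hABval
    have hmain : a*(ω0*gs)*ρ*((1-ω0)*B)*(A+s) ≤ ω0*(2-A+s)*(B*(1-ρ))*(A+s) := by
      rw [hL2, hR2]
      have hint := mul_pos (mul_pos (mul_pos hω0p (show (0:ℝ) < A-1 by linarith))
        (show (0:ℝ) < 1-ω0 by linarith)) hB
      linarith [hint]
    exact le_of_mul_le_mul_right hmain hAs
  -- main course
  intro n hn
  have hIccIco : Finset.Icc n (-1:ℤ) = Finset.Ico n 0 := by
    ext x; simp only [Finset.mem_Icc, Finset.mem_Ico]; omega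
  have hsumg : ∑ j ∈ Finset.Icc n (-1:ℤ), gbar j ≤ ω0 * gs * ρ * (1 - ρ)⁻¹ := by
    have h1 : ∑ j ∈ Finset.Icc n (-1:ℤ), gbar j
        ≤ ∑ j ∈ Finset.Icc n (-1:ℤ), ω0*gs*ρ*ρ^((-1-j).toNat) := by
      apply Finset.sum_le_sum
      intro j hj
      simp only [Finset.mem_Icc] at hj
      have h2 := hub ((-1-j).toNat)
      rw [show (-1 : ℤ) - (((-1-j).toNat : ℕ) : ℤ) = j by omega] at h2
      calc gbar j ≤ ω0*gs*ρ^((-1-j).toNat + 1) := h2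
        _ = ω0*gs*ρ*ρ^((-1-j).toNat) := by ring
    calc ∑ j ∈ Finset.Icc n (-1:ℤ), gbar j
        ≤ ∑ j ∈ Finset.Icc n (-1:ℤ), ω0*gs*ρ*ρ^((-1-j).toNat) := h1
      _ = ω0*gs*ρ * ∑ j ∈ Finset.Icc n (-1:ℤ), ρ^((-1-j).toNat) := by
          rw [Finset.mul_sum]
      _ ≤ ω0*gs*ρ * (1-ρ)⁻¹ := by
          apply mul_le_mul_of_nonneg_left _ (by positivity)
          rw [hIccIco]
          exact geom_aux n ρ hρ0.le hρ1
  -- product bound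
  have hprod : ∀ p : ℤ, n ≤ p → (p ≤ -1 →
      ∏ j ∈ Finset.Icc n p, (A - 2*a*gbar j)⁻¹ ≤
        gbar n / gbar (p+1) * Real.exp (a / B * ∑ j ∈ Finset.Icc n p, gbar j)) := by
    refine Int.le_induction ?_ ?_
    · intro hn1
      rw [Finset.Icc_self, Finset.prod_singleton, Finset.sum_singleton]
      exact hpt n hn1
    · intro p hp ih hple
      have hple' : p ≤ -1 := by omega
      rw [hins n p (by omega), Finset.prod_insert (by simp only [Finset.mem_Icc]; omega),
        Finset.sum_insert (by simp only [Finset.mem_Icc]; omega)]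
      have h1 := hpt (p+1) hple
      have h2 := ih hple'
      have hprodpos : 0 ≤ ∏ j ∈ Finset.Icc n p, (A - 2*a*gbar j)⁻¹ := by
        apply Finset.prod_nonneg
        intro j hj
        simp only [Finset.mem_Icc] at hj
        exact inv_nonneg.mpr (le_trans hB.le (hBj j (by omega)).1)
      have hc1 : (0:ℝ) ≤ gbar (p+1) / gbar (p+1+1) * Real.exp (a/B*gbar (p+1)) :=
        mul_nonneg (div_nonneg (hgpos _).le (hgpos _).le) (Real.exp_nonneg _)
      calc (A - 2*a*gbar (p+1))⁻¹ * ∏ j ∈ Finset.Icc n p, (A - 2*a*gbar j)⁻¹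
          ≤ (gbar (p+1) / gbar (p+1+1) * Real.exp (a/B*gbar (p+1))) *
            (gbar n / gbar (p+1) * Real.exp (a/B * ∑ j ∈ Finset.Icc n p, gbar j)) :=
            mul_le_mul h1 h2 hprodpos hc1
        _ = gbar n / gbar (p+1+1) *
            Real.exp (a/B * (gbar (p+1) + ∑ j ∈ Finset.Icc n p, gbar j)) := by
            rw [mul_add, Real.exp_add]
            field_simp [(hgpos (p+1)).ne', (hgpos (p+1+1)).ne']
  -- per-term bound
  have hterm : ∀ p ∈ Finset.Ico n (0:ℤ),
      1 / gbar n ^ γ * (gbar p ^ ν * ∏ j ∈ Finset.Icc n p, (A - 2*a*gbar j)⁻¹)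
        ≤ (ω0*gs) ^ (ν-γ) * (Υ^ν)^((-1-p).toNat) * Real.exp E := by
    intro p hp
    simp only [Finset.mem_Ico] at hp
    obtain ⟨hnp, hp0⟩ := hp
    set m := (-1 - p).toNat with hmdef
    have hpm : p = -1 - (m:ℤ) := by omega
    have hP := hprod p hnp (by omega)
    have hsub : ∑ j ∈ Finset.Icc n p, gbar j ≤ ∑ j ∈ Finset.Icc n (-1:ℤ), gbar j := by
      apply Finset.sum_le_sum_of_subset_of_nonneg
      · intro x hx
        simp only [Finset.mem_Icc] at hx ⊢
        omega
      · intro i _ _; exact (hgpos i).le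
    have hexpbd : Real.exp (a/B * ∑ j ∈ Finset.Icc n p, gbar j) ≤ Real.exp E := by
      apply Real.exp_le_exp.mpr
      have hab : (0:ℝ) ≤ a / B := div_nonneg ha.le hB.le
      calc a/B * ∑ j ∈ Finset.Icc n p, gbar j
          ≤ a/B * ∑ j ∈ Finset.Icc n (-1:ℤ), gbar j := mul_le_mul_of_nonneg_left hsub hab
        _ ≤ a/B * (ω0*gs*ρ*(1-ρ)⁻¹) := mul_le_mul_of_nonneg_left hsumg hab
        _ ≤ E := hEbd
    have hQ : 1/gbar n^γ * (gbar p^ν * (gbar n / gbar (p+1))) ≤ (ω0*gs)^(ν-γ) * (Υ^ν)^m := by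
      have hA1' : gbar n ^ ((1:ℝ)-γ) = gbar n / gbar n ^ γ := by
        rw [Real.rpow_sub (hgpos n), Real.rpow_one]
      have hq1 : 1/gbar n^γ * (gbar p^ν * (gbar n/gbar (p+1)))
          = gbar n^((1:ℝ)-γ) * gbar p^ν / gbar (p+1) := by
        rw [hA1']; ring
      rw [hq1]
      have s1 : gbar n ^ ((1:ℝ)-γ) ≤ gbar (p+1) ^ ((1:ℝ)-γ) :=
        Real.rpow_le_rpow (hgpos n).le (hmono.le_iff_le.mpr (by omega)) (by linarith)
      have s2 : gbar (p+1) ^ ((1:ℝ)-γ) / gbar (p+1) = gbar (p+1) ^ (-γ) := by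
        rw [show ((1:ℝ)-γ) = -γ + 1 by ring, Real.rpow_add (hgpos (p+1)), Real.rpow_one,
          mul_div_assoc, div_self (hgpos (p+1)).ne', mul_one]
      have s3 : gbar (p+1) ^ (-γ) ≤ gbar p ^ (-γ) :=
        Real.rpow_le_rpow_of_nonpos (hgpos p) (hmono.le_iff_le.mpr (by omega)) (by linarith)
      have s4 : gbar p ^ ν ≤ (ω0*gs*ρ^(m+1)) ^ ν := by
        apply Real.rpow_le_rpow (hgpos p).le _ hν.le
        have h2 := hub m
        rw [← hpm] at h2
        exact h2
      have s5 : gbar p ^ (-γ) ≤ (ω0*gs*(A^(m+1))⁻¹) ^ (-γ) := by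
        have hApow : (0:ℝ) < A^(m+1) := pow_pos hA0 _
        apply Real.rpow_le_rpow_of_nonpos (mul_pos hw (inv_pos.mpr hApow)) _ (by linarith)
        have h2 := hlb (m+1)
        push_cast at h2
        rw [show -((m:ℤ)+1) = p by omega] at h2
        rw [← div_eq_mul_inv, div_le_iff₀ hApow]
        exact h2
      have s1' : gbar n^((1:ℝ)-γ) * gbar p^ν ≤ gbar (p+1)^((1:ℝ)-γ) * gbar p^ν :=
        mul_le_mul_of_nonneg_right s1 (Real.rpow_nonneg (hgpos p).le ν)
      calc gbar n^((1:ℝ)-γ) * gbar p^ν / gbar (p+1)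
          ≤ gbar (p+1)^((1:ℝ)-γ) * gbar p^ν / gbar (p+1) := by
            rw [div_eq_mul_inv, div_eq_mul_inv]
            exact mul_le_mul_of_nonneg_right s1' (inv_nonneg.mpr (hgpos (p+1)).le)
        _ = gbar p^ν * (gbar (p+1)^((1:ℝ)-γ) / gbar (p+1)) := by ring
        _ = gbar p^ν * gbar (p+1)^(-γ) := by rw [s2]
        _ ≤ (ω0*gs*ρ^(m+1))^ν * (ω0*gs*(A^(m+1))⁻¹)^(-γ) := by
            apply mul_le_mul s4 (le_trans s3 s5)
              (Real.rpow_nonneg (hgpos (p+1)).le _)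
              (Real.rpow_nonneg (mul_nonneg hw.le (pow_nonneg hρ0.le _)) _)
        _ ≤ (ω0*gs)^(ν-γ) * (Υ^ν)^m := h8 m
    have hprodbd : ∏ j ∈ Finset.Icc n p, (A-2*a*gbar j)⁻¹ ≤ gbar n / gbar (p+1) * Real.exp E :=
      le_trans hP (mul_le_mul_of_nonneg_left hexpbd (div_nonneg (hgpos n).le (hgpos (p+1)).le))
    have hc2 : (0:ℝ) ≤ gbar p ^ ν := Real.rpow_nonneg (hgpos p).le ν
    have hc3 : (0:ℝ) ≤ 1 / gbar n ^ γ :=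
      div_nonneg zero_le_one (Real.rpow_nonneg (hgpos n).le γ)
    calc 1 / gbar n ^ γ * (gbar p ^ ν * ∏ j ∈ Finset.Icc n p, (A - 2*a*gbar j)⁻¹)
        ≤ 1 / gbar n ^ γ * (gbar p ^ ν * (gbar n / gbar (p+1) * Real.exp E)) :=
          mul_le_mul_of_nonneg_left (mul_le_mul_of_nonneg_left hprodbd hc2) hc3
      _ = (1 / gbar n ^ γ * (gbar p ^ ν * (gbar n / gbar (p+1)))) * Real.exp E := by ring
      _ ≤ ((ω0*gs)^(ν-γ) * (Υ^ν)^m) * Real.exp E :=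
          mul_le_mul_of_nonneg_right hQ (Real.exp_nonneg E)
  -- assemble
  rw [Finset.mul_sum]
  have hsum2 : ∑ p ∈ Finset.Ico n (0:ℤ), (ω0*gs)^(ν-γ) * (Υ^ν)^((-1-p).toNat) * Real.exp E
      = (ω0*gs)^(ν-γ) * Real.exp E * ∑ p ∈ Finset.Ico n (0:ℤ), (Υ^ν)^((-1-p).toNat) := by
    rw [Finset.mul_sum]
    apply Finset.sum_congr rfl
    intros; ring
  calc ∑ p ∈ Finset.Ico n (0:ℤ),
        1/gbar n^γ * (gbar p^ν * ∏ j ∈ Finset.Icc n p, (A-2*a*gbar j)⁻¹)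
      ≤ ∑ p ∈ Finset.Ico n (0:ℤ), (ω0*gs)^(ν-γ) * (Υ^ν)^((-1-p).toNat) * Real.exp E :=
        Finset.sum_le_sum hterm
    _ = (ω0*gs)^(ν-γ) * Real.exp E * ∑ p ∈ Finset.Ico n (0:ℤ), (Υ^ν)^((-1-p).toNat) := hsum2
    _ ≤ (ω0*gs)^(ν-γ) * Real.exp E * (1 - Υ^ν)⁻¹ := by
        apply mul_le_mul_of_nonneg_left (geom_aux n (Υ^ν) hUq0 hUq1)
          (mul_nonneg (Real.rpow_nonneg hw.le _) (Real.exp_nonneg _))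
    _ = (ω0*gs)^(ν-γ) / (1 - Υ^ν) * Real.exp E := by rw [div_eq_mul_inv]; ring
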